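/- Let (X,τ) be a compatible decoration with W^σ = {w ∈ W : w∘σ = σ∘w} and W^X the minimal-length left coset representatives of W_X in W. Then (W^X)^σ = {w ∈ W^X : σwσ = w} equals the τ-fixed points of the normalizer 𝒲 = N_{W^X}(W_X) = {w ∈ W^X : wW_X = W_Xw}. In particular W^σ = W_X · 𝒲^τ with W_X ∩ 𝒲^τ = {1}. -/

import Mathlib

namespace RWGCD

open List CoxeterSystem

theorem eq_sandwich_iff {W : Type*} [Group W] (x y c t : W) :
    (x * t * y = c) ↔ (t = x⁻¹ * c * y⁻¹) := by
  constructor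
  · intro h; rw [← h]; group
  · intro h; rw [h]; group

theorem helper_shift {W : Type*} [Group W] (a b x : W) (h : (a * b) * x = x * (a * b)) :
    (a * b) * (x * a) * (b * a) = x * (a * b) * (a * b) * a := by
  calc (a * b) * (x * a) * (b * a) = ((a * b) * x) * ((a * b) * a) := by group
    _ = (x * (a * b)) * ((a * b) * a) := by rw [h]
    _ = x * (a * b) * (a * b) * a := by group

theorem helper_pow {W : Type*} [Group W] (A B t : W) (n : ℕ) :
    A ^ n * (A * t * B) * B ^ n = A ^ (n + 1) * t * B ^ (n + 1) := by
  group

theorem sum_range_double {A : Type*} [AddCommMonoid A] (f : ℕ → A) (m : ℕ) :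
    ∑ k ∈ Finset.range m, (f (2 * k) + f (2 * k + 1)) = ∑ r ∈ Finset.range (2 * m), f r := by
  induction m with
  | zero => simp
  | succ n ih =>
    rw [Finset.sum_range_succ, ih, Nat.mul_succ, Finset.sum_range_succ, Finset.sum_range_succ]
    exact (add_assoc _ _ _).symm

theorem sum_range_add_split {A : Type*} [AddCommMonoid A] (f : ℕ → A) (m n : ℕ) :
    ∑ r ∈ Finset.range (m + n), f r
      = ∑ r ∈ Finset.range m, f r + ∑ k ∈ Finset.range n, f (m + k) := by
  induction n with
  | zero => simp
  | succ n ih =>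
    rw [← Nat.add_assoc, Finset.sum_range_succ, ih, Finset.sum_range_succ, add_assoc]

variable {I : Type} {W : Type} [Group W] {M : CoxeterMatrix I} (cs : CoxeterSystem M W)

local prefix:100 "s" => cs.simple
local prefix:100 "π" => cs.wordProd
local prefix:100 "ℓ" => cs.length

noncomputable local instance : DecidableEq W := Classical.decEq W

theorem simple_conj_conj (i : I) (t : W) : s i * (s i * t * s i) * s i = t := by
  calc s i * (s i * t * s i) * s i = (s i * s i) * t * (s i * s i) := by group
    _ = t := by rw [cs.simple_mul_simple_self]; group

theorem conj_simple_eq_simple_iff (i : I) (t : W) :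
    (s i * t * s i = s i) ↔ (t = s i) := by
  rw [eq_sandwich_iff, inv_simple, cs.simple_mul_simple_self, one_mul]

/-- The permutation of `W × ZMod 2` associated to a simple reflection. -/
noncomputable def brp (i : I) : Equiv.Perm (W × ZMod 2) where
  toFun x := (s i * x.1 * s i, x.2 + if x.1 = s i then 1 else 0)
  invFun x := (s i * x.1 * s i, x.2 + if x.1 = s i then 1 else 0)
  left_inv := by
    rintro ⟨t, e⟩
    simp only [simple_conj_conj, conj_simple_eq_simple_iff]
    rcases eq_or_ne t (s i) with h | h
    · simp only [h, if_pos rfl, add_assoc]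
      norm_num
      decide
    · simp [h]
  right_inv := by
    rintro ⟨t, e⟩
    simp only [simple_conj_conj, conj_simple_eq_simple_iff]
    rcases eq_or_ne t (s i) with h | h
    · simp only [h, if_pos rfl, add_assoc]
      norm_num
      decide
    · simp [h]

theorem brp_apply (i : I) (t : W) (e : ZMod 2) :
    brp cs i (t, e) = (s i * t * s i, e + if t = s i then 1 else 0) := rfl

theorem brp_pow_apply (i j : I) (m : ℕ) (t : W) (e : ZMod 2) :
    ((brp cs i * brp cs j) ^ m) (t, e) =
      ((s i * s j) ^ m * t * (s j * s i) ^ m,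
        e + ∑ k ∈ Finset.range m,
          ((if t = (s j * s i) ^ (2 * k) * s j then (1 : ZMod 2) else 0) +
           (if t = (s j * s i) ^ (2 * k + 1) * s j then (1 : ZMod 2) else 0))) := by
  induction m generalizing t e with
  | zero => simp
  | succ n ih =>
    rw [pow_succ, Equiv.Perm.mul_apply, Equiv.Perm.mul_apply]
    have hFt : (brp cs j) (t, e) = (s j * t * s j, e + if t = s j then 1 else 0) := rfl
    rw [hFt, brp_apply, ih, Prod.mk.injEq]
    have inner : s i * (s j * t * s j) * s i = (s i * s j) * t * (s j * s i) := by group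
    constructor
    · rw [inner, helper_pow]
    · have hc : ∀ c : W, (s i * (s j * t * s j) * s i = c)
          ↔ (t = (s j * s i) * c * (s i * s j)) := by
        intro c
        rw [inner, eq_sandwich_iff, mul_inv_rev, mul_inv_rev, inv_simple, inv_simple]
      have key2 : ∀ k : ℕ, (s j * s i) * ((s j * s i) ^ (2 * k) * s j) * (s i * s j)
          = (s j * s i) ^ (2 * (k + 1)) * s j := by
        intro k
        rw [helper_shift (s j) (s i) ((s j * s i) ^ (2 * k))
          ((Commute.refl (s j * s i)).pow_right (2 * k)).eq]
        conv_rhs => rw [show 2 * (k + 1) = 2 * k + 1 + 1 by ring, pow_succ, pow_succ]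
      have key3 : ∀ k : ℕ, (s j * s i) * ((s j * s i) ^ (2 * k + 1) * s j) * (s i * s j)
          = (s j * s i) ^ (2 * (k + 1) + 1) * s j := by
        intro k
        rw [helper_shift (s j) (s i) ((s j * s i) ^ (2 * k + 1))
          ((Commute.refl (s j * s i)).pow_right (2 * k + 1)).eq]
        conv_rhs => rw [show 2 * (k + 1) + 1 = 2 * k + 1 + 1 + 1 by ring, pow_succ, pow_succ]
      have h2 : ∀ k : ℕ, (s i * (s j * t * s j) * s i = (s j * s i) ^ (2 * k) * s j)
          ↔ (t = (s j * s i) ^ (2 * (k + 1)) * s j) := by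
        intro k; rw [hc, key2]
      have h3 : ∀ k : ℕ, (s i * (s j * t * s j) * s i = (s j * s i) ^ (2 * k + 1) * s j)
          ↔ (t = (s j * s i) ^ (2 * (k + 1) + 1) * s j) := by
        intro k; rw [hc, key3]
      have h1 : (s j * t * s j = s i) ↔ (t = (s j * s i) ^ (2 * 0 + 1) * s j) := by
        rw [eq_sandwich_iff, inv_simple, show 2 * 0 + 1 = 1 by norm_num, pow_one]
      have h0 : (t = s j) ↔ (t = (s j * s i) ^ (2 * 0) * s j) := by
        rw [show 2 * 0 = 0 by norm_num, pow_zero, one_mul]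
      simp only [h2, h3]
      rw [Finset.sum_range_succ']
      simp only [← h0, ← h1]
      abel

theorem brp_liftable : M.IsLiftable (brp cs) := by
  intro i j
  apply Equiv.ext
  rintro ⟨t, e⟩
  rw [show ((1 : Equiv.Perm (W × ZMod 2))) (t, e) = (t, e) from rfl]
  rw [brp_pow_apply, cs.simple_mul_simple_pow i j, cs.simple_mul_simple_pow' i j]
  rw [sum_range_double (fun r => if t = (s j * s i) ^ r * s j then (1 : ZMod 2) else 0) (M i j)]
  rw [two_mul, sum_range_add_split]
  have hq : ∀ k : ℕ, (s j * s i) ^ (M.M i j + k) = (s j * s i) ^ k := by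
    intro k
    rw [pow_add, cs.simple_mul_simple_pow' i j, one_mul]
  simp only [hq]
  have : ∀ x : ZMod 2, x + x = 0 := by decide
  rw [this]
  simp

/-- The canonical homomorphism into permutations of `W × ZMod 2`. -/
noncomputable def brpHom : W →* Equiv.Perm (W × ZMod 2) :=
  cs.lift ⟨brp cs, brp_liftable cs⟩

theorem brpHom_simple (i : I) : brpHom cs (s i) = brp cs i :=
  cs.lift_apply_simple (brp_liftable cs) i

/-- The parity cocycle. -/
noncomputable def eta (w t : W) : ZMod 2 := ((brpHom cs w) (t, 0)).2

theorem brpHom_apply (w : W) (t : W) (e : ZMod 2) :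
    brpHom cs w (t, e) = (w * t * w⁻¹, e + eta cs w t) := by
  revert t e
  induction w using cs.simple_induction_left with
  | one => intro t e; simp [eta]
  | mul_simple_left w i ih =>
    intro t e
    have he : eta cs (s i * w) t
        = eta cs w t + (if w * t * w⁻¹ = s i then 1 else 0) := by
      calc eta cs (s i * w) t = ((brpHom cs (s i * w)) (t, 0)).2 := rfl
        _ = ((brp cs i) ((brpHom cs w) (t, 0))).2 := by
            rw [map_mul, Equiv.Perm.mul_apply, brpHom_simple]
        _ = ((brp cs i) (w * t * w⁻¹, 0 + eta cs w t)).2 := by rw [ih]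
        _ = (0 + eta cs w t) + (if w * t * w⁻¹ = s i then 1 else 0) := by rw [brp_apply]
        _ = eta cs w t + (if w * t * w⁻¹ = s i then 1 else 0) := by rw [zero_add]
    calc brpHom cs (s i * w) (t, e) = (brp cs i) ((brpHom cs w) (t, e)) := by
          rw [map_mul, Equiv.Perm.mul_apply, brpHom_simple]
      _ = (brp cs i) (w * t * w⁻¹, e + eta cs w t) := by rw [ih]
      _ = (s i * (w * t * w⁻¹) * s i, (e + eta cs w t)
            + (if w * t * w⁻¹ = s i then 1 else 0)) := by rw [brp_apply]
      _ = ((s i * w) * t * (s i * w)⁻¹, e + eta cs (s i * w) t) := by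
          rw [he, Prod.mk.injEq]
          constructor
          · rw [mul_inv_rev, inv_simple]; group
          · rw [add_assoc]

theorem eta_mul (v w t : W) : eta cs (v * w) t = eta cs w t + eta cs v (w * t * w⁻¹) := by
  calc eta cs (v * w) t = ((brpHom cs (v * w)) (t, 0)).2 := rfl
    _ = ((brpHom cs v) ((brpHom cs w) (t, 0))).2 := by rw [map_mul, Equiv.Perm.mul_apply]
    _ = ((brpHom cs v) (w * t * w⁻¹, 0 + eta cs w t)).2 := by rw [brpHom_apply cs w t 0]
    _ = (0 + eta cs w t) + eta cs v (w * t * w⁻¹) := by rw [brpHom_apply cs v]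
    _ = eta cs w t + eta cs v (w * t * w⁻¹) := by rw [zero_add]

theorem eta_simple (i : I) (t : W) :
    eta cs (s i) t = if t = s i then 1 else 0 := by
  calc eta cs (s i) t = ((brpHom cs (s i)) (t, 0)).2 := rfl
    _ = ((brp cs i) (t, 0)).2 := by rw [brpHom_simple]
    _ = 0 + (if t = s i then 1 else 0) := by rw [brp_apply]
    _ = _ := by rw [zero_add]

theorem eta_simple_mul (i : I) (w t : W) :
    eta cs (s i * w) t = eta cs w t + (if w * t * w⁻¹ = s i then 1 else 0) := by
  rw [eta_mul, eta_simple]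

theorem eta_mul_simple (w : W) (i : I) (t : W) :
    eta cs (w * s i) t = (if t = s i then 1 else 0) + eta cs w (s i * t * s i) := by
  rw [eta_mul, eta_simple]
  congr 2
  rw [inv_simple]

theorem eta_wordProd (ω : List I) (t : W) :
    eta cs (π ω) t = (List.count t (cs.rightInvSeq ω) : ZMod 2) := by
  induction ω generalizing t with
  | nil => simp [eta, wordProd_nil]
  | cons i ω ih =>
    rw [wordProd_cons, eta_simple_mul, ih]
    show _ = ((List.count t (((π ω)⁻¹ * (s i) * (π ω)) :: cs.rightInvSeq ω) : ℕ) : ZMod 2)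
    rw [List.count_cons]
    have hiff : (π ω * t * (π ω)⁻¹ = s i) ↔ (t = (π ω)⁻¹ * s i * π ω) := by
      rw [eq_sandwich_iff, inv_inv]
    by_cases h : t = (π ω)⁻¹ * s i * π ω
    · rw [if_pos (hiff.mpr h)]
      simp [h]
    · rw [if_neg (fun hc => h (hiff.mp hc))]
      have h' : ¬ ((π ω)⁻¹ * s i * π ω = t) := fun hc => h hc.symm
      simp [h']

theorem eta_refl_self (w : W) (i : I) :
    eta cs (w * s i * w⁻¹) (w * s i * w⁻¹) = 1 := by
  induction w using cs.simple_induction_left with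
  | one => simp [eta_simple]
  | mul_simple_left w j ih =>
    set t' := w * s i * w⁻¹ with ht'
    have hex : (s j * w) * s i * (s j * w)⁻¹ = (s j * t') * s j := by
      rw [ht', mul_inv_rev, inv_simple]
      group
    rw [hex]
    have e3 : s j * ((s j * t') * s j) * s j = t' := by
      have := simple_conj_conj cs j t'
      calc s j * ((s j * t') * s j) * s j = s j * (s j * t' * s j) * s j := by group
        _ = t' := simple_conj_conj cs j t'
    rw [eta_mul_simple, e3, eta_simple_mul, ih]
    have hc1 : ((s j * t') * s j = s j) ↔ (t' = s j) := by
      have : (s j * t') * s j = s j * t' * s j := by group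
      rw [this, conj_simple_eq_simple_iff]
    have hc2 : (t' * t' * t'⁻¹ = s j) ↔ (t' = s j) := by
      have : t' * t' * t'⁻¹ = t' := by group
      rw [this]
    simp only [hc1, hc2]
    by_cases h : t' = s j
    · simp only [if_pos h]; decide
    · simp only [if_neg h]; decide

theorem eta_isReflection_self {t : W} (ht : cs.IsReflection t) : eta cs t t = 1 := by
  obtain ⟨w, i, rfl⟩ := ht
  exact eta_refl_self cs w i

theorem zmod2_cases (x : ZMod 2) : x = 0 ∨ x = 1 := by revert x; decide

theorem eta_eq_one_iff {t : W} (ht : cs.IsReflection t) (w : W) :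
    eta cs w t = 1 ↔ ℓ (w * t) < ℓ w := by
  constructor
  · intro h
    obtain ⟨ω, hred, hw⟩ := cs.exists_reduced_word' w
    have hcount : (List.count t (cs.rightInvSeq ω) : ZMod 2) = 1 := by
      rw [← eta_wordProd, ← hw, h]
    have hpos : t ∈ cs.rightInvSeq ω := by
      rw [← List.count_pos_iff]
      rcases Nat.eq_zero_or_pos (List.count t (cs.rightInvSeq ω)) with h0 | h0
      · rw [h0] at hcount; norm_num at hcount
      · exact h0
    have := cs.isRightInversion_of_mem_rightInvSeq hred hpos
    rw [← hw] at this
    exact this.2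
  · intro hlt
    rcases zmod2_cases (eta cs w t) with h0 | h1
    · exfalso
      have he : eta cs (w * t) t = 1 := by
        rw [eta_mul]
        have e1 : t * t * t⁻¹ = t := by group
        rw [e1, h0, eta_isReflection_self cs ht, add_zero]
      -- forward direction applied to w * t
      obtain ⟨ω, hred, hw⟩ := cs.exists_reduced_word' (w * t)
      have hcount : (List.count t (cs.rightInvSeq ω) : ZMod 2) = 1 := by
        rw [← eta_wordProd, ← hw, he]
      have hpos : t ∈ cs.rightInvSeq ω := by
        rw [← List.count_pos_iff]
        rcases Nat.eq_zero_or_pos (List.count t (cs.rightInvSeq ω)) with h0' | h0'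
        · rw [h0'] at hcount; norm_num at hcount
        · exact h0'
      have hinv := cs.isRightInversion_of_mem_rightInvSeq hred hpos
      rw [← hw] at hinv
      have := hinv.2
      rw [mul_assoc, ht.mul_self, mul_one] at this
      omega
    · exact h1

theorem strong_exchange_right (ω : List I) {t : W} (ht : cs.IsReflection t)
    (hl : ℓ (π ω * t) < ℓ (π ω)) :
    ∃ ω', ω' <+ ω ∧ ω'.length + 1 = ω.length ∧ π ω * t = π ω' := by
  have h1 : eta cs (π ω) t = 1 := (eta_eq_one_iff cs ht (π ω)).mpr hl
  rw [eta_wordProd] at h1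
  have hpos : t ∈ cs.rightInvSeq ω := by
    rw [← List.count_pos_iff]
    rcases Nat.eq_zero_or_pos (List.count t (cs.rightInvSeq ω)) with h0 | h0
    · rw [h0] at h1; norm_num at h1
    · exact h0
  rw [List.mem_iff_getElem] at hpos
  obtain ⟨j, hj, hget⟩ := hpos
  have hjlen : j < ω.length := by
    rw [cs.length_rightInvSeq] at hj
    exact hj
  have hgetD : (cs.rightInvSeq ω).getD j 1 = t := by
    rw [List.getD_eq_getElem _ _ hj, hget]
  refine ⟨ω.eraseIdx j, List.eraseIdx_sublist ω j, List.length_eraseIdx_add_one hjlen, ?_⟩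
  rw [← hgetD]
  exact cs.wordProd_mul_getD_rightInvSeq ω j

theorem strong_exchange_left (ω : List I) {t : W} (ht : cs.IsReflection t)
    (hl : ℓ (t * π ω) < ℓ (π ω)) :
    ∃ ω', ω' <+ ω ∧ ω'.length + 1 = ω.length ∧ t * π ω = π ω' := by
  have h1 : ℓ (π ω.reverse * t) < ℓ (π ω.reverse) := by
    rw [cs.wordProd_reverse]
    have e1 : (π ω)⁻¹ * t = (t * π ω)⁻¹ := by
      rw [mul_inv_rev, ht.inv]
    rw [e1, cs.length_inv, cs.length_inv]
    exact hl
  obtain ⟨ω', hsub, hlen, heq⟩ := strong_exchange_right cs ω.reverse ht h1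
  refine ⟨ω'.reverse, ?_, ?_, ?_⟩
  · have := hsub.reverse
    rwa [List.reverse_reverse] at this
  · rw [List.length_reverse]
    rw [List.length_reverse] at hlen
    exact hlen
  · rw [cs.wordProd_reverse]
    rw [cs.wordProd_reverse] at heq
    rw [← heq, mul_inv_rev, inv_inv, ht.inv]

theorem exists_reduced_sublist :
    ∀ (n : ℕ) (ω : List I), ω.length ≤ n → ∃ ρ, ρ <+ ω ∧ cs.IsReduced ρ ∧ π ρ = π ω := by
  intro n
  induction n with
  | zero =>
    intro ω hω
    rw [Nat.le_zero, List.length_eq_zero_iff] at hω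
    exact ⟨ω, List.Sublist.refl ω, by simp [hω, CoxeterSystem.IsReduced], rfl⟩
  | succ n ih =>
    intro ω hω
    by_cases hred : cs.IsReduced ω
    · exact ⟨ω, List.Sublist.refl ω, hred, rfl⟩
    · -- find a descent position
      have hlt : ℓ (π ω) < ω.length :=
        lt_of_le_of_ne (cs.length_wordProd_le ω) hred
      have hstep : ∀ k, (hk : k < ω.length) →
          π (ω.take (k+1)) = π (ω.take k) * s (ω[k]) := by
        intro k hk
        rw [List.take_succ, List.getElem?_eq_getElem hk]
        simp only [Option.toList_some]
        rw [cs.wordProd_append, cs.wordProd_singleton]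
      have hdesc : ∃ k, ∃ (hk : k < ω.length),
          ℓ (π (ω.take (k+1))) < ℓ (π (ω.take k)) := by
        by_contra hno
        push_neg at hno
        have hall : ∀ k, k ≤ ω.length → ℓ (π (ω.take k)) = k := by
          intro k
          induction k with
          | zero => intro _; simp
          | succ m ihm =>
            intro hm
            have hmlt : m < ω.length := by omega
            have h1 := ihm (by omega)
            have h2 := hno m hmlt
            rcases cs.length_mul_simple (π (ω.take m)) (ω[m]) with hc | hc
            · rw [hstep m hmlt, hc, h1]
            · exfalso
              rw [hstep m hmlt] at h2
              omega
        have := hall ω.length (le_refl _)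
        rw [List.take_length] at this
        omega
      obtain ⟨k, hk, hkdesc⟩ := hdesc
      have hl2 : ℓ (π (ω.take k) * s (ω[k])) < ℓ (π (ω.take k)) := by
        rw [← hstep k hk]; exact hkdesc
      obtain ⟨α, hαsub, hαlen, hαeq⟩ :=
        strong_exchange_right cs (ω.take k) (cs.isReflection_simple (ω[k])) hl2
      set ω₂ := α ++ ω.drop (k+1) with hω₂
      have hπ : π ω₂ = π ω := by
        rw [hω₂, cs.wordProd_append, ← hαeq, ← hstep k hk, ← cs.wordProd_append,
          List.take_append_drop]
      have hsub2 : ω₂ <+ ω := by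
        have hd : ω.drop (k+1) <+ ω.drop k := by
          rw [List.drop_eq_getElem_cons hk]
          exact List.sublist_cons_self _ _
        have := List.Sublist.append hαsub hd
        rwa [List.take_append_drop] at this
      have hlen2 : ω₂.length ≤ n := by
        rw [hω₂, List.length_append, List.length_drop]
        rw [List.length_take] at hαlen
        omega
      obtain ⟨ρ, hρsub, hρred, hρeq⟩ := ih ω₂ hlen2
      exact ⟨ρ, hρsub.trans hsub2, hρred, by rw [hρeq, hπ]⟩

/-! ### Parabolic subgroups -/

section Parabolic

variable (X : Set I)

local notation "P" => Subgroup.closure (cs.simple '' X)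

theorem wordProd_mem_P {ω : List I} (hω : ∀ i ∈ ω, i ∈ X) : π ω ∈ P := by
  induction ω with
  | nil => rw [cs.wordProd_nil]; exact one_mem _
  | cons i ω ih =>
    rw [cs.wordProd_cons]
    exact mul_mem (Subgroup.subset_closure ⟨i, hω i List.mem_cons_self, rfl⟩)
      (ih fun j hj => hω j (List.mem_cons_of_mem i hj))

theorem simple_mem_P {j : I} (hj : j ∈ X) : s j ∈ P :=
  Subgroup.subset_closure ⟨j, hj, rfl⟩

theorem exists_Xword {u : W} (hu : u ∈ P) : ∃ ω, (∀ i ∈ ω, i ∈ X) ∧ π ω = u := by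
  induction hu using Subgroup.closure_induction with
  | mem x hx =>
    obtain ⟨j, hj, rfl⟩ := hx
    exact ⟨[j], by simpa using hj, cs.wordProd_singleton j⟩
  | one => exact ⟨[], by simp, cs.wordProd_nil⟩
  | mul x y hx hy ihx ihy =>
    obtain ⟨ω₁, h1, e1⟩ := ihx
    obtain ⟨ω₂, h2, e2⟩ := ihy
    exact ⟨ω₁ ++ ω₂, fun i hi => (List.mem_append.mp hi).elim (h1 i) (h2 i),
      by rw [cs.wordProd_append, e1, e2]⟩
  | inv x hx ihx =>
    obtain ⟨ω, h1, e1⟩ := ihx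
    exact ⟨ω.reverse, fun i hi => h1 i (List.mem_reverse.mp hi),
      by rw [cs.wordProd_reverse, e1]⟩

theorem exists_reduced_Xword {u : W} (hu : u ∈ P) :
    ∃ ω, (∀ i ∈ ω, i ∈ X) ∧ cs.IsReduced ω ∧ π ω = u := by
  obtain ⟨ω, hX, he⟩ := exists_Xword cs X hu
  obtain ⟨ρ, hsub, hred, heq⟩ := exists_reduced_sublist cs ω.length ω (le_refl _)
  exact ⟨ρ, fun i hi => hX i (hsub.subset hi), hred, by rw [heq, he]⟩

theorem exists_P_descent {u : W} (hu : u ∈ P) (hne : u ≠ 1) :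
    ∃ j ∈ X, ∃ u' ∈ P, u = s j * u' ∧ ℓ u' + 1 = ℓ u := by
  obtain ⟨ω, hX, hred, he⟩ := exists_reduced_Xword cs X hu
  match ω, hX, hred, he with
  | [], _, _, he => exact absurd (he.symm.trans (cs.wordProd_nil)) hne
  | j :: ω', hX, hred, he =>
    refine ⟨j, hX j List.mem_cons_self, π ω', ?_, ?_, ?_⟩
    · exact wordProd_mem_P cs X (fun i hi => hX i (List.mem_cons_of_mem j hi))
    · rw [← he, cs.wordProd_cons]
    · have hred' : cs.IsReduced ω' := by
        have := hred.drop 1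
        simpa using this
      rw [hred', ← he, hred]
      simp

theorem coset_min_exists (w : W) : ∃ u ∈ P, ∀ p ∈ P, ℓ (u * w) ≤ ℓ (p * w) := by
  classical
  set S : Set ℕ := {n | ∃ p ∈ P, ℓ (p * w) = n} with hS
  have hne : S.Nonempty := ⟨ℓ (1 * w), 1, one_mem _, rfl⟩
  obtain ⟨p₀, hp₀, hp₀len⟩ : ∃ p ∈ P, ℓ (p * w) = sInf S := Nat.sInf_mem hne
  refine ⟨p₀, hp₀, fun p hp => ?_⟩
  rw [hp₀len]
  exact Nat.sInf_le ⟨p, hp, rfl⟩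

theorem length_P_mul_aux (v : W) (hmin : ∀ p ∈ P, ℓ v ≤ ℓ (p * v)) :
    ∀ n, ∀ u ∈ P, ℓ u ≤ n → ℓ (u * v) = ℓ u + ℓ v := by
  intro n
  induction n with
  | zero =>
    intro u _ hu
    have : u = 1 := cs.length_eq_zero_iff.mp (Nat.le_zero.mp hu)
    simp [this]
  | succ n ih =>
    intro u hu hulen
    rcases eq_or_ne u 1 with rfl | hne
    · simp
    obtain ⟨j, hjX, u', hu', huu, hulen'⟩ := exists_P_descent cs X hu hne
    have ihu' : ℓ (u' * v) = ℓ u' + ℓ v := ih u' hu' (by omega)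
    have hslu : ℓ (s j * u') = ℓ u := by rw [← huu]
    rcases cs.length_simple_mul (u' * v) j with hc | hc
    · rw [huu, mul_assoc, hc, ihu']
      omega
    · exfalso
      obtain ⟨ρ, hρX, hρred, hρeq⟩ := exists_reduced_Xword cs X hu'
      obtain ⟨β, hβred, hβeq⟩ := cs.exists_reduced_word' v
      have hρlen : ℓ u' = ρ.length := by rw [← hρeq]; exact hρred
      have hβlen : ℓ v = β.length := by rw [hβeq]; exact hβred
      have hword : π (ρ ++ β) = u' * v := by rw [cs.wordProd_append, hρeq, ← hβeq]
      have hlt : ℓ (s j * π (ρ ++ β)) < ℓ (π (ρ ++ β)) := by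
        rw [hword]; omega
      obtain ⟨ω', hsub, hlen, heq⟩ :=
        strong_exchange_left cs (ρ ++ β) (cs.isReflection_simple j) hlt
      rw [List.sublist_append_iff] at hsub
      obtain ⟨α, γ, rfl, hα, hγ⟩ := hsub
      rw [List.length_append, List.length_append] at hlen
      have hαle := hα.length_le
      have hγle := hγ.length_le
      rw [hword] at heq
      by_cases hcase : γ.length = β.length
      · have hγβ : γ = β := hγ.eq_of_length hcase
        subst hγβ
        have heq2 : (s j * u') * v = π α * v := by
          rw [mul_assoc, heq, cs.wordProd_append, ← hβeq]
        have heq3 : π α = s j * u' := (mul_right_cancel heq2).symm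
        have : ℓ (π α) ≤ α.length := cs.length_wordProd_le α
        rw [heq3, ← huu] at this
        omega
      · have hαρ : α = ρ := by
          apply hα.eq_of_length
          omega
        subst hαρ
        have hp : u'⁻¹ * s j * u' ∈ P := by
          apply mul_mem (mul_mem (inv_mem hu') (simple_mem_P cs X hjX)) hu'
        have heq2 : π γ = (u'⁻¹ * s j * u') * v := by
          rw [cs.wordProd_append, hρeq] at heq
          calc π γ = u'⁻¹ * (u' * π γ) := by group
            _ = u'⁻¹ * (s j * (u' * v)) := by rw [← heq]
            _ = (u'⁻¹ * s j * u') * v := by group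
        have h1 : ℓ v ≤ ℓ (π γ) := by rw [heq2]; exact hmin _ hp
        have h2 : ℓ (π γ) ≤ γ.length := cs.length_wordProd_le γ
        omega

theorem Dmin_min {v : W} (hD : ∀ j ∈ X, ℓ v < ℓ (s j * v)) :
    ∀ p ∈ P, ℓ v ≤ ℓ (p * v) := by
  obtain ⟨u₀, hu₀, hmin⟩ := coset_min_exists cs X v
  have hmin₀ : ∀ p ∈ P, ℓ (u₀ * v) ≤ ℓ (p * (u₀ * v)) := by
    intro p hp
    rw [← mul_assoc]
    exact hmin (p * u₀) (mul_mem hp hu₀)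
  rcases eq_or_ne u₀ 1 with rfl | hne
  · intro p hp
    have := hmin p hp
    rwa [one_mul] at this
  · exfalso
    have hinvne : u₀⁻¹ ≠ 1 := by
      intro h
      exact hne (by rw [← inv_inv u₀, h, inv_one])
    obtain ⟨j, hjX, u', hu', huu, hulen'⟩ := exists_P_descent cs X (inv_mem hu₀) hinvne
    have hv : v = u₀⁻¹ * (u₀ * v) := by group
    have hsv : s j * v = u' * (u₀ * v) := by
      conv_lhs => rw [hv, huu]
      have expand : s j * (s j * u' * (u₀ * v)) = s j * (s j * (u' * (u₀ * v))) := by group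
      rw [expand, cs.simple_mul_simple_cancel_left]
    have len1 : ℓ (s j * v) = ℓ u' + ℓ (u₀ * v) := by
      rw [hsv]
      exact length_P_mul_aux cs X (u₀ * v) hmin₀ (ℓ u') u' hu' (le_refl _)
    have len2 : ℓ v = ℓ u'  + 1 + ℓ (u₀ * v) := by
      conv_lhs => rw [hv]
      rw [length_P_mul_aux cs X (u₀ * v) hmin₀ (ℓ u₀⁻¹) u₀⁻¹ (inv_mem hu₀) (le_refl _), hulen']
    have := hD j hjX
    omega

theorem length_P_mul {v : W} (hD : ∀ j ∈ X, ℓ v < ℓ (s j * v)) {u : W} (hu : u ∈ P) :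
    ℓ (u * v) = ℓ u + ℓ v :=
  length_P_mul_aux cs X v (Dmin_min cs X hD) (ℓ u) u hu (le_refl _)

theorem length_mul_P {v : W} (hD : ∀ j ∈ X, ℓ v < ℓ (v * s j)) {u : W} (hu : u ∈ P) :
    ℓ (v * u) = ℓ v + ℓ u := by
  have hDinv : ∀ j ∈ X, ℓ v⁻¹ < ℓ (s j * v⁻¹) := by
    intro j hj
    have e1 : s j * v⁻¹ = (v * s j)⁻¹ := by rw [mul_inv_rev, inv_simple]
    rw [e1, cs.length_inv, cs.length_inv]
    exact hD j hj
  have := length_P_mul cs X hDinv (inv_mem hu)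
  have e2 : u⁻¹ * v⁻¹ = (v * u)⁻¹ := by rw [mul_inv_rev]
  rw [e2, cs.length_inv, cs.length_inv, cs.length_inv] at this
  omega

end Parabolic

/-! ### Inversion sets determine lengths -/

theorem eta_inv_eq_one_iff {t : W} (ht : cs.IsReflection t) (z : W) :
    eta cs z⁻¹ t = 1 ↔ ℓ (t * z) < ℓ z := by
  rw [eta_eq_one_iff cs ht z⁻¹]
  have e1 : z⁻¹ * t = (t * z)⁻¹ := by rw [mul_inv_rev, ht.inv]
  rw [e1, cs.length_inv, cs.length_inv]

theorem length_add_of_inversion_subset :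
    ∀ n, ∀ u w : W, ℓ u ≤ n →
    (∀ t, cs.IsReflection t → ℓ (t * u) < ℓ u → ℓ (t * w) < ℓ w) →
    ℓ u + ℓ (u⁻¹ * w) = ℓ w := by
  intro n
  induction n with
  | zero =>
    intro u w hu _
    have : u = 1 := cs.length_eq_zero_iff.mp (Nat.le_zero.mp hu)
    simp [this]
  | succ n ih =>
    intro u w hulen hsub
    rcases eq_or_ne u 1 with rfl | hne
    · simp
    obtain ⟨i, hdi⟩ := cs.exists_leftDescent_of_ne_one hne
    have hdi' : ℓ (s i * u) < ℓ u := hdi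
    have hdw : ℓ (s i * w) < ℓ w := hsub (s i) (cs.isReflection_simple i) hdi'
    have hsub' : ∀ t, cs.IsReflection t →
        ℓ (t * (s i * u)) < ℓ (s i * u) → ℓ (t * (s i * w)) < ℓ (s i * w) := by
      intro t ht hlt
      have h1 : eta cs (s i * u)⁻¹ t = 1 := (eta_inv_eq_one_iff cs ht _).mpr hlt
      have hrec : ∀ z : W, eta cs (s i * z)⁻¹ t
          = (if t = s i then 1 else 0) + eta cs z⁻¹ (s i * t * s i) := by
        intro z
        rw [mul_inv_rev, inv_simple, eta_mul_simple]
      rw [hrec u] at h1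
      by_cases hti : t = s i
      · exfalso
        rw [if_pos hti] at h1
        have h2 : eta cs u⁻¹ (s i * t * s i) = 0 := by
          rcases zmod2_cases (eta cs u⁻¹ (s i * t * s i)) with h0 | h0
          · exact h0
          · rw [h0] at h1; exact absurd h1 (by decide)
        rw [hti, cs.simple_mul_simple_self, one_mul] at h2
        have h3 : eta cs u⁻¹ (s i) = 1 :=
          (eta_inv_eq_one_iff cs (cs.isReflection_simple i) u).mpr hdi'
        rw [h2] at h3
        exact absurd h3 (by decide)
      · rw [if_neg hti, zero_add] at h1
        have hconj : cs.IsReflection (s i * t * s i) := by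
          have := ht.conj (s i)
          rwa [inv_simple] at this
        have h2 : ℓ ((s i * t * s i) * u) < ℓ u := (eta_inv_eq_one_iff cs hconj u).mp h1
        have h3 : ℓ ((s i * t * s i) * w) < ℓ w := hsub _ hconj h2
        have h4 : eta cs w⁻¹ (s i * t * s i) = 1 := (eta_inv_eq_one_iff cs hconj w).mpr h3
        have h5 : eta cs (s i * w)⁻¹ t = 1 := by
          rw [hrec w, if_neg hti, zero_add]
          exact h4
        exact (eta_inv_eq_one_iff cs ht _).mp h5
    have hlen' : ℓ (s i * u) ≤ n := by omega
    have := ih (s i * u) (s i * w) hlen' hsub'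
    have e1 : (s i * u)⁻¹ * (s i * w) = u⁻¹ * w := by
      rw [mul_inv_rev, inv_simple]
      calc u⁻¹ * s i * (s i * w) = u⁻¹ * (s i * (s i * w)) := by group
        _ = u⁻¹ * w := by rw [cs.simple_mul_simple_cancel_left]
    rw [e1] at this
    have hup : ℓ (s i * u) + 1 = ℓ u := by
      rcases cs.length_simple_mul u i with hc | hc
      · omega
      · exact hc
    have hwp : ℓ (s i * w) + 1 = ℓ w := by
      rcases cs.length_simple_mul w i with hc | hc
      · omega
      · exact hc
    omega

section Longest

variable (X : Set I)

local notation "P" => Subgroup.closure (cs.simple '' X)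

theorem inversion_mem_P {c t : W} (hc : c ∈ P) (ht : cs.IsReflection t)
    (hlt : ℓ (t * c) < ℓ c) : t ∈ P := by
  obtain ⟨ρ, hρX, hρred, hρeq⟩ := exists_reduced_Xword cs X hc
  rw [← hρeq] at hlt
  obtain ⟨ω', hsub, _, heq⟩ := strong_exchange_left cs ρ ht hlt
  have h1 : π ω' ∈ P := wordProd_mem_P cs X (fun i hi => hρX i (hsub.subset hi))
  have h2 : t = π ω' * c⁻¹ := by
    rw [← heq, hρeq]
    group
  rw [h2]
  exact mul_mem h1 (inv_mem hc)

theorem eq_longest_of_max {wX : W} (hwXmem : wX ∈ P)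
    (hlong : ∀ u ∈ P, ℓ u ≤ ℓ wX)
    {c : W} (hc : c ∈ P) (hlen : ℓ c = ℓ wX) : c = wX := by
  have hNL : ∀ t, cs.IsReflection t → ℓ (t * c) < ℓ c → ℓ (t * wX) < ℓ wX := by
    intro t ht hlt
    have htP : t ∈ P := inversion_mem_P cs X hc ht hlt
    have h1 : ℓ (t * wX) ≤ ℓ wX := hlong _ (mul_mem htP hwXmem)
    have h2 : ℓ (t * wX) ≠ ℓ wX := ht.length_mul_right_ne wX
    omega
  have := length_add_of_inversion_subset cs (ℓ c) c wX (le_refl _) hNL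
  have h0 : ℓ (c⁻¹ * wX) = 0 := by omega
  have h1 : c⁻¹ * wX = 1 := cs.length_eq_zero_iff.mp h0
  calc c = c * (c⁻¹ * wX) := by rw [h1, mul_one]
    _ = wX := by group

end Longest

/-! ### Diagram automorphisms -/

section Phi

variable (τ : Equiv.Perm I) (φ : W ≃* W)

theorem phi_wordProd (hφs : ∀ i, φ (s i) = s (τ i)) (ω : List I) :
    φ (π ω) = π (ω.map τ) := by
  induction ω with
  | nil => simp
  | cons i ω ih =>
    rw [cs.wordProd_cons, map_mul, hφs, ih, List.map_cons, cs.wordProd_cons]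

theorem length_phi (hφs : ∀ i, φ (s i) = s (τ i)) (hτ2 : ∀ i, τ (τ i) = i) (w : W) :
    ℓ (φ w) = ℓ w := by
  have le1 : ∀ z : W, ℓ (φ z) ≤ ℓ z := by
    intro z
    obtain ⟨ω, hred, hz⟩ := cs.exists_reduced_word' z
    rw [hz, phi_wordProd cs τ φ hφs]
    calc ℓ (π (ω.map τ)) ≤ (ω.map τ).length := cs.length_wordProd_le _
      _ = ω.length := List.length_map τ
      _ = ℓ (π ω) := hred.symm
  have hsymm : ∀ z : W, φ.symm z = φ z⁻¹⁻¹ * 1 ∨ True := fun z => Or.inr trivial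
  have le2 : ℓ w ≤ ℓ (φ w) := by
    obtain ⟨ω, hred, hz⟩ := cs.exists_reduced_word' (φ w)
    have hw : w = π (ω.map τ) := by
      apply φ.injective
      rw [phi_wordProd cs τ φ hφs, List.map_map]
      have : (τ : I → I) ∘ (τ : I → I) = id := funext hτ2
      rw [this, List.map_id, ← hz]
    conv_lhs => rw [hw]
    calc ℓ (π (ω.map τ)) ≤ (ω.map τ).length := cs.length_wordProd_le _
      _ = ω.length := List.length_map τ
      _ = ℓ (π ω) := hred.symm
      _ = ℓ (φ w) := by rw [← hz]
  have := le1 w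
  omega

variable (X : Set I)

local notation "P" => Subgroup.closure (cs.simple '' X)

theorem phi_mem_P (hφs : ∀ i, φ (s i) = s (τ i)) (hτX : ∀ i ∈ X, τ i ∈ X)
    {u : W} (hu : u ∈ P) : φ u ∈ P := by
  induction hu using Subgroup.closure_induction with
  | mem x hx =>
    obtain ⟨j, hj, rfl⟩ := hx
    rw [hφs]
    exact simple_mem_P cs X (hτX j hj)
  | one => rw [map_one]; exact one_mem _
  | mul x y hx hy ihx ihy => rw [map_mul]; exact mul_mem ihx ihy
  | inv x hx ihx => rw [map_inv]; exact inv_mem ihx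

theorem Dmin_phi (hφs : ∀ i, φ (s i) = s (τ i)) (hτ2 : ∀ i, τ (τ i) = i)
    (hτX : ∀ i ∈ X, τ i ∈ X) {w : W} (hD : ∀ j ∈ X, ℓ w < ℓ (s j * w)) :
    ∀ j ∈ X, ℓ (φ w) < ℓ (s j * φ w) := by
  intro j hj
  have e1 : s j * φ w = φ (s (τ j) * w) := by
    rw [map_mul, hφs (τ j), hτ2 j]
  rw [e1, length_phi cs τ φ hφs hτ2, length_phi cs τ φ hφs hτ2]
  exact hD (τ j) (hτX j hj)

theorem conj_wX_eq_phi (hφs : ∀ i, φ (s i) = s (τ i)) {wX : W} (hwX2 : wX * wX = 1)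
    (hoi : ∀ i ∈ X, wX * s i * wX = s (τ i)) :
    ∀ u ∈ P, wX * u * wX = φ u := by
  have hwXinv : wX⁻¹ = wX := inv_eq_of_mul_eq_one_right hwX2
  intro u hu
  induction hu using Subgroup.closure_induction with
  | mem x hx =>
    obtain ⟨j, hj, rfl⟩ := hx
    rw [hoi j hj, hφs]
  | one => rw [map_one, mul_one, hwX2]
  | mul x y hx hy ihx ihy =>
    rw [map_mul, ← ihx, ← ihy]
    have e1 : (wX * x * wX) * (wX * y * wX) = wX * x * (wX * wX) * y * wX := by group
    rw [e1, hwX2]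
    group
  | inv x hx ihx =>
    rw [map_inv, ← ihx, mul_inv_rev, mul_inv_rev, hwXinv]
    group

end Phi

end RWGCD

open RWGCD

theorem restricted_weyl_group_coset_decomposition
    {I : Type} {W : Type} [Group W] {M : CoxeterMatrix I} (cs : CoxeterSystem M W)
    (X : Set I) (τ : Equiv.Perm I) (φ : W ≃* W)
    (hφs : ∀ i, φ (cs.simple i) = cs.simple (τ i))
    (hτ2 : ∀ i, τ (τ i) = i) (hτX : ∀ i ∈ X, τ i ∈ X)
    (hfin : Set.Finite ((Subgroup.closure (cs.simple '' X) : Subgroup W) : Set W))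
    (wX : W) (hwXmem : wX ∈ Subgroup.closure (cs.simple '' X)) (hwX2 : wX * wX = 1)
    (hlong : ∀ u ∈ Subgroup.closure (cs.simple '' X), cs.length u ≤ cs.length wX)
    (hoi : ∀ i ∈ X, wX * cs.simple i * wX = cs.simple (τ i)) :
    -- (W^X)^σ = 𝒲^τ :
    (∀ w : W, (∀ j ∈ X, cs.length w < cs.length (cs.simple j * w)) →
      (wX * w = φ w * wX ↔
        ((∀ u ∈ Subgroup.closure (cs.simple '' X),
            w * u * w⁻¹ ∈ Subgroup.closure (cs.simple '' X) ∧
            w⁻¹ * u * w ∈ Subgroup.closure (cs.simple '' X)) ∧ φ w = w)))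
    ∧
    -- W^σ = W_X · 𝒲^τ :
    (∀ w : W, wX * w = φ w * wX ↔
      ∃ u ∈ Subgroup.closure (cs.simple '' X), ∃ v : W,
        (∀ j ∈ X, cs.length v < cs.length (cs.simple j * v)) ∧
        (∀ u' ∈ Subgroup.closure (cs.simple '' X),
            v * u' * v⁻¹ ∈ Subgroup.closure (cs.simple '' X) ∧
            v⁻¹ * u' * v ∈ Subgroup.closure (cs.simple '' X)) ∧
        φ v = v ∧ w = u * v)
    ∧
    -- W_X ∩ 𝒲^τ = {1} :
    (∀ v ∈ Subgroup.closure (cs.simple '' X),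
      (∀ j ∈ X, cs.length v < cs.length (cs.simple j * v)) →
      (∀ u' ∈ Subgroup.closure (cs.simple '' X),
          v * u' * v⁻¹ ∈ Subgroup.closure (cs.simple '' X) ∧
          v⁻¹ * u' * v ∈ Subgroup.closure (cs.simple '' X)) →
      φ v = v → v = 1) := by
  have hwXinv : wX⁻¹ = wX := inv_eq_of_mul_eq_one_right hwX2
  have lphi := length_phi cs τ φ hφs hτ2
  have conjwX := conj_wX_eq_phi cs τ φ X hφs hwX2 hoi
  have sjwX : ∀ j ∈ X, cs.length (cs.simple j * wX) + 1 = cs.length wX := by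
    intro j hj
    have h2 := hlong _ (mul_mem (simple_mem_P cs X hj) hwXmem)
    rcases cs.length_simple_mul wX j with hc | hc
    · omega
    · exact hc
  have wXsj : ∀ j ∈ X, cs.length (wX * cs.simple j) + 1 = cs.length wX := by
    intro j hj
    have h2 := hlong _ (mul_mem hwXmem (simple_mem_P cs X hj))
    rcases cs.length_mul_simple wX j with hc | hc
    · omega
    · exact hc
  have RD_of_len : ∀ z : W, cs.length (z * wX) = cs.length z + cs.length wX →
      ∀ j ∈ X, cs.length z < cs.length (z * cs.simple j) := by
    intro z hz j hj
    rcases cs.length_mul_simple z j with hc | hc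
    · omega
    · exfalso
      have e : (z * cs.simple j) * (cs.simple j * wX) = z * wX := by
        calc (z * cs.simple j) * (cs.simple j * wX)
            = z * (cs.simple j * (cs.simple j * wX)) := by group
          _ = z * wX := by rw [cs.simple_mul_simple_cancel_left]
      have hle := cs.length_mul_le (z * cs.simple j) (cs.simple j * wX)
      rw [e] at hle
      have := sjwX j hj
      have hlwX : 1 ≤ cs.length wX := by
        have h1 := cs.length_simple j
        omega
      omega
  have part1 : ∀ w : W, (∀ j ∈ X, cs.length w < cs.length (cs.simple j * w)) →
      (wX * w = φ w * wX ↔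
        ((∀ u ∈ Subgroup.closure (cs.simple '' X),
            w * u * w⁻¹ ∈ Subgroup.closure (cs.simple '' X) ∧
            w⁻¹ * u * w ∈ Subgroup.closure (cs.simple '' X)) ∧ φ w = w)) := by
    intro w hD
    constructor
    · intro h
      have hphiw : φ w = wX * w * wX := by
        have e : φ w = (φ w * wX) * wX := by rw [mul_assoc, hwX2, mul_one]
        rw [← h] at e
        exact e
      have hDphi := Dmin_phi cs τ φ X hφs hτ2 hτX hD
      have l1 : cs.length (wX * w) = cs.length wX + cs.length w :=
        length_P_mul cs X hD hwXmem
      have l2 : cs.length (φ w) = cs.length w := lphi w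
      have hwwX : w * wX = wX * φ w := by
        rw [hphiw]
        calc w * wX = (wX * wX) * (w * wX) := by rw [hwX2]; group
          _ = wX * (wX * w * wX) := by group
      have l3 : cs.length (w * wX) = cs.length w + cs.length wX := by
        rw [hwwX, length_P_mul cs X hDphi hwXmem, l2]
        omega
      have hRD : ∀ j ∈ X, cs.length w < cs.length (w * cs.simple j) := RD_of_len w l3
      have l4 : cs.length (φ w * wX) = cs.length (φ w) + cs.length wX := by
        rw [← h, l1, l2]
        omega
      have hRDphi : ∀ j ∈ X, cs.length (φ w) < cs.length (φ w * cs.simple j) :=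
        RD_of_len (φ w) l4
      obtain ⟨ρw, hρwred, hρweq⟩ := cs.exists_reduced_word' w
      obtain ⟨ρX, hρXX, hρXred, hρXeq⟩ := exists_reduced_Xword cs X hwXmem
      have hρwlen : cs.length w = ρw.length := by rw [hρweq]; exact hρwred
      have hρXlen : cs.length wX = ρX.length := by rw [← hρXeq]; exact hρXred
      have norm2 : ∀ j ∈ X, w⁻¹ * cs.simple j * w ∈ Subgroup.closure (cs.simple '' X) := by
        intro j hj
        have hword : cs.wordProd (ρw ++ ρX) = w * wX := by
          rw [cs.wordProd_append, ← hρweq, hρXeq]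
        have hlt : cs.length (cs.simple j * cs.wordProd (ρw ++ ρX))
            < cs.length (cs.wordProd (ρw ++ ρX)) := by
          rw [hword]
          have e1 : cs.simple j * (w * wX) = (cs.simple j * wX) * φ w := by
            rw [hwwX]; group
          rw [e1, length_P_mul cs X hDphi (mul_mem (simple_mem_P cs X hj) hwXmem), l3]
          have := sjwX j hj
          omega
        obtain ⟨ω', hsub, hlen, heq⟩ :=
          strong_exchange_left cs (ρw ++ ρX) (cs.isReflection_simple j) hlt
        rw [List.sublist_append_iff] at hsub
        obtain ⟨α, γ, rfl, hα, hγ⟩ := hsub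
        rw [List.length_append, List.length_append] at hlen
        have hαle := hα.length_le
        have hγle := hγ.length_le
        rw [hword, cs.wordProd_append] at heq
        by_cases hcase : α.length = ρw.length
        · have hαρ : α = ρw := hα.eq_of_length hcase
          subst hαρ
          rw [← hρweq] at heq
          have e3 : cs.wordProd γ = w⁻¹ * (cs.simple j * (w * wX)) := by
            rw [heq]; group
          have e2 : w⁻¹ * cs.simple j * w = cs.wordProd γ * wX := by
            rw [e3]
            calc w⁻¹ * cs.simple j * w
                = w⁻¹ * cs.simple j * w * (wX * wX) := by rw [hwX2, mul_one]
              _ = (w⁻¹ * (cs.simple j * (w * wX))) * wX := by group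
          rw [e2]
          exact mul_mem (wordProd_mem_P cs X (fun i hi => hρXX i (hγ.subset hi))) hwXmem
        · exfalso
          have hγρ : γ = ρX := hγ.eq_of_length (by omega)
          subst hγρ
          rw [hρXeq] at heq
          have e2 : (cs.simple j * w) * wX = cs.wordProd α * wX := by
            rw [← heq]; group
          have e3 : cs.simple j * w = cs.wordProd α := mul_right_cancel e2
          have hle : cs.length (cs.simple j * w) ≤ α.length := by
            rw [e3]; exact cs.length_wordProd_le α
          have := hD j hj
          omega
      have norm1 : ∀ j ∈ X, w * cs.simple j * w⁻¹ ∈ Subgroup.closure (cs.simple '' X) := by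
        intro j hj
        have hword : cs.wordProd (ρX ++ ρw) = wX * w := by
          rw [cs.wordProd_append, hρXeq, ← hρweq]
        have hlt : cs.length (cs.wordProd (ρX ++ ρw) * cs.simple j)
            < cs.length (cs.wordProd (ρX ++ ρw)) := by
          rw [hword]
          have e1 : (wX * w) * cs.simple j = φ w * (wX * cs.simple j) := by
            rw [h]; group
          rw [e1, length_mul_P cs X hRDphi (mul_mem hwXmem (simple_mem_P cs X hj)), l1, l2]
          have := wXsj j hj
          omega
        obtain ⟨ω', hsub, hlen, heq⟩ :=
          strong_exchange_right cs (ρX ++ ρw) (cs.isReflection_simple j) hlt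
        rw [List.sublist_append_iff] at hsub
        obtain ⟨α, γ, rfl, hα, hγ⟩ := hsub
        rw [List.length_append, List.length_append] at hlen
        have hαle := hα.length_le
        have hγle := hγ.length_le
        rw [hword, cs.wordProd_append] at heq
        by_cases hcase : γ.length = ρw.length
        · have hγρ : γ = ρw := hγ.eq_of_length hcase
          subst hγρ
          rw [← hρweq] at heq
          have e2 : w * cs.simple j * w⁻¹ = wX * cs.wordProd α := by
            calc w * cs.simple j * w⁻¹
                = wX⁻¹ * ((wX * w) * cs.simple j) * w⁻¹ := by group
              _ = wX⁻¹ * (cs.wordProd α * w) * w⁻¹ := by rw [heq]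
              _ = wX * cs.wordProd α := by rw [hwXinv]; group
          rw [e2]
          exact mul_mem hwXmem (wordProd_mem_P cs X (fun i hi => hρXX i (hα.subset hi)))
        · exfalso
          have hαρ : α = ρX := hα.eq_of_length (by omega)
          subst hαρ
          rw [hρXeq] at heq
          have e3 : w * cs.simple j = cs.wordProd γ := by
            apply mul_left_cancel (a := wX)
            rw [← mul_assoc]
            exact heq
          have hle : cs.length (w * cs.simple j) ≤ γ.length := by
            rw [e3]; exact cs.length_wordProd_le γ
          have := hRD j hj
          omega
      have normAll : ∀ u ∈ Subgroup.closure (cs.simple '' X),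
          w * u * w⁻¹ ∈ Subgroup.closure (cs.simple '' X) ∧
          w⁻¹ * u * w ∈ Subgroup.closure (cs.simple '' X) := by
        intro u hu
        constructor
        · induction hu using Subgroup.closure_induction with
          | mem x hx =>
            obtain ⟨j, hj, rfl⟩ := hx
            exact norm1 j hj
          | one =>
            have e : w * (1 : W) * w⁻¹ = 1 := by group
            rw [e]; exact one_mem _
          | mul x y hx hy ihx ihy =>
            have e : w * (x * y) * w⁻¹ = (w * x * w⁻¹) * (w * y * w⁻¹) := by group
            rw [e]; exact mul_mem ihx ihy
          | inv x hx ihx =>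
            have e : w * x⁻¹ * w⁻¹ = (w * x * w⁻¹)⁻¹ := by group
            rw [e]; exact inv_mem ihx
        · induction hu using Subgroup.closure_induction with
          | mem x hx =>
            obtain ⟨j, hj, rfl⟩ := hx
            exact norm2 j hj
          | one =>
            have e : w⁻¹ * (1 : W) * w = 1 := by group
            rw [e]; exact one_mem _
          | mul x y hx hy ihx ihy =>
            have e : w⁻¹ * (x * y) * w = (w⁻¹ * x * w) * (w⁻¹ * y * w) := by group
            rw [e]; exact mul_mem ihx ihy
          | inv x hx ihx =>
            have e : w⁻¹ * x⁻¹ * w = (w⁻¹ * x * w)⁻¹ := by group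
            rw [e]; exact inv_mem ihx
      have hphie : φ w = w := by
        have hcP : w * wX * w⁻¹ ∈ Subgroup.closure (cs.simple '' X) := (normAll wX hwXmem).1
        have e : φ w = (wX * (w * wX * w⁻¹)) * w := by
          rw [hphiw]; group
        have hl : cs.length (φ w) = cs.length (wX * (w * wX * w⁻¹)) + cs.length w := by
          rw [e]
          exact length_P_mul cs X hD (mul_mem hwXmem hcP)
        have h0 : cs.length (wX * (w * wX * w⁻¹)) = 0 := by omega
        have h1 : wX * (w * wX * w⁻¹) = 1 := cs.length_eq_zero_iff.mp h0
        rw [e, h1, one_mul]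
      exact ⟨normAll, hphie⟩
    · rintro ⟨hnorm, hphi⟩
      have hRD : ∀ j ∈ X, cs.length w < cs.length (w * cs.simple j) := by
        intro j hj
        rcases cs.length_mul_simple w j with hc | hc
        · omega
        · exfalso
          have htP : w * cs.simple j * w⁻¹ ∈ Subgroup.closure (cs.simple '' X) :=
            (hnorm _ (simple_mem_P cs X hj)).1
          have htne : w * cs.simple j * w⁻¹ ≠ 1 := by
            intro h1
            have h2 : cs.simple j = 1 := by
              have h4 : w⁻¹ * (w * cs.simple j * w⁻¹) * w = cs.simple j := by group
              rw [h1] at h4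
              rw [← h4]
              group
            have hl1 := cs.length_simple j
            rw [h2, cs.length_one] at hl1
            exact absurd hl1 (by norm_num)
          have htlen : cs.length (w * cs.simple j * w⁻¹) ≠ 0 :=
            fun h0 => htne (cs.length_eq_zero_iff.mp h0)
          have e : (w * cs.simple j * w⁻¹) * w = w * cs.simple j := by group
          have hP := length_P_mul cs X hD htP
          rw [e] at hP
          omega
      have hcP : w * wX * w⁻¹ ∈ Subgroup.closure (cs.simple '' X) := (hnorm wX hwXmem).1
      have e : (w * wX * w⁻¹) * w = w * wX := by group
      have h1 := length_P_mul cs X hD hcP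
      rw [e] at h1
      have h2 := length_mul_P cs X hRD hwXmem
      have hclen : cs.length (w * wX * w⁻¹) = cs.length wX := by omega
      have hc : w * wX * w⁻¹ = wX := eq_longest_of_max cs X hwXmem hlong hcP hclen
      rw [hphi]
      have h3 := congrArg (fun z => z * w) hc
      rw [e] at h3
      exact h3.symm
  refine ⟨part1, ?_, ?_⟩
  · intro w
    constructor
    · intro h
      obtain ⟨u₀, hu₀, hmin⟩ := coset_min_exists cs X w
      set v := u₀ * w with hv
      have hminv : ∀ p ∈ Subgroup.closure (cs.simple '' X), cs.length v ≤ cs.length (p * v) := by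
        intro p hp
        have e : p * v = (p * u₀) * w := by rw [hv]; group
        rw [e]
        exact hmin (p * u₀) (mul_mem hp hu₀)
      have hDv : ∀ j ∈ X, cs.length v < cs.length (cs.simple j * v) := by
        intro j hj
        have h1 := hminv (cs.simple j) (simple_mem_P cs X hj)
        have h2 := cs.length_simple_mul_ne v j
        omega
      have hveq : wX * v = φ v * wX := by
        have e1 : (wX * u₀ * wX) * (wX * w) = wX * (u₀ * w) := by
          calc (wX * u₀ * wX) * (wX * w) = wX * u₀ * (wX * wX) * w := by group
            _ = wX * (u₀ * w) := by rw [hwX2]; group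
        calc wX * v = (wX * u₀ * wX) * (wX * w) := by rw [hv, e1]
          _ = φ u₀ * (φ w * wX) := by rw [conjwX u₀ hu₀, h]
          _ = (φ u₀ * φ w) * wX := by group
          _ = φ v * wX := by rw [hv, map_mul]
      obtain ⟨hnormv, hφv⟩ := (part1 v hDv).mp hveq
      refine ⟨u₀⁻¹, inv_mem hu₀, v, hDv, hnormv, hφv, ?_⟩
      rw [hv]; group
    · rintro ⟨u, huP, v, hDv, hnormv, hφv, rfl⟩
      have hwXv : wX * v = φ v * wX := (part1 v hDv).mpr ⟨hnormv, hφv⟩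
      have e1 : (wX * u * wX) * (wX * v) = wX * (u * v) := by
        calc (wX * u * wX) * (wX * v) = wX * u * (wX * wX) * v := by group
          _ = wX * (u * v) := by rw [hwX2]; group
      calc wX * (u * v) = (wX * u * wX) * (wX * v) := e1.symm
        _ = φ u * (φ v * wX) := by rw [conjwX u huP, hwXv]
        _ = (φ u * φ v) * wX := by group
        _ = φ (u * v) * wX := by rw [map_mul]
  · intro v hvP hDv _ _
    have h1 := Dmin_min cs X hDv v⁻¹ (inv_mem hvP)
    have e : v⁻¹ * v = 1 := by group
    rw [e, cs.length_one] at h1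
    exact cs.length_eq_zero_iff.mp (Nat.le_zero.mp h1)
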